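/- (Interior Schwarzschild pressure profile.) Let G, ρ, R > 0, set M(r) = (4/3)·π·r³·ρ and Mtot = (4/3)·π·R³·ρ, and assume G·Mtot/R < 4/9. Define p : [0,R] → ℝ by p(r) = ρ·( √(1 − 2·G·Mtot·r²/R³) − √(1 − 2·G·Mtot/R) ) / ( 3·√(1 − 2·G·Mtot/R) − √(1 − 2·G·Mtot·r²/R³) ). Then the denominator is strictly positive on [0,R], p is nonnegative with p(R) = 0, and p satisfies the Tolman–Oppenheimer–Volkoff equation p'(r) = −G·( ρ + p(r) )·( M(r) + 4π r³ p(r) )/( r·( r − 2·G·M(r) ) ) for all r ∈ (0,R). -/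

import Mathlib

open Set

/-- Interior Schwarzschild pressure profile: for a constant-density relativistic star
with `G·Mtot/R < 4/9`, the explicit profile `p` has positive denominator, is
nonnegative, vanishes at the surface, and satisfies the TOV equation. -/
theorem stmt18 (G ρ R : ℝ) (hG : 0 < G) (hρ : 0 < ρ) (hR : 0 < R)
    (M : ℝ → ℝ) (hM : ∀ r, M r = (4 / 3) * Real.pi * r ^ 3 * ρ)
    (hbound : G * M R / R < 4 / 9)
    (p : ℝ → ℝ)
    (hp : ∀ r, p r
      = ρ * (Real.sqrt (1 - 2 * G * M R * r ^ 2 / R ^ 3)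
              - Real.sqrt (1 - 2 * G * M R / R))
          / (3 * Real.sqrt (1 - 2 * G * M R / R)
              - Real.sqrt (1 - 2 * G * M R * r ^ 2 / R ^ 3))) :
    (∀ r ∈ Icc (0 : ℝ) R,
        0 < 3 * Real.sqrt (1 - 2 * G * M R / R)
              - Real.sqrt (1 - 2 * G * M R * r ^ 2 / R ^ 3)) ∧
    (∀ r ∈ Icc (0 : ℝ) R, 0 ≤ p r) ∧
    p R = 0 ∧
    (∀ r ∈ Ioo (0 : ℝ) R,
      HasDerivAt p
        (-(G * (ρ + p r) * (M r + 4 * Real.pi * r ^ 3 * p r))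
          / (r * (r - 2 * G * M r))) r) := by
  have hπ := Real.pi_pos
  have hMR : M R = 4 / 3 * Real.pi * R ^ 3 * ρ := hM R
  have hMRpos : 0 < M R := by rw [hMR]; positivity
  set a : ℝ := 2 * G * M R / R ^ 3 with ha
  have ha_pos : 0 < a := by rw [ha]; positivity
  have haρ : a = 8 / 3 * Real.pi * G * ρ := by
    rw [ha, hMR]; field_simp; ring
  have harg : ∀ r : ℝ, 1 - 2 * G * M R * r ^ 2 / R ^ 3 = 1 - a * r ^ 2 := by
    intro r; rw [ha]; ring
  have hargR : 1 - 2 * G * M R / R = 1 - a * R ^ 2 := by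
    rw [ha]; field_simp
  have hkR : a * R ^ 2 < 8 / 9 := by
    have h1 : a * R ^ 2 = 2 * (G * M R / R) := by rw [ha]; field_simp
    rw [h1]; linarith
  set fR : ℝ := Real.sqrt (1 - a * R ^ 2) with hfRdef
  have hRarg : (0:ℝ) < 1 - a * R ^ 2 := by nlinarith
  have hfR_lt : 1 / 3 < fR := by
    rw [hfRdef, show (1:ℝ)/3 = Real.sqrt ((1:ℝ)/9) by
      rw [show (1:ℝ)/9 = (1/3)^2 by norm_num, Real.sqrt_sq (by norm_num)]]
    exact Real.sqrt_lt_sqrt (by norm_num) (by linarith)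
  -- facts for r in [0,R]
  have hpos_arg : ∀ r ∈ Icc (0:ℝ) R, 0 < 1 - a * r ^ 2 := by
    intro r hr
    have h2 : r ^ 2 ≤ R ^ 2 := by nlinarith [hr.1, hr.2]
    nlinarith
  have hle1 : ∀ r ∈ Icc (0:ℝ) R, Real.sqrt (1 - a * r ^ 2) ≤ 1 := by
    intro r hr
    have : a * r ^ 2 ≥ 0 := by positivity
    exact Real.sqrt_le_one.mpr (by linarith)
  have hfRle : ∀ r ∈ Icc (0:ℝ) R, fR ≤ Real.sqrt (1 - a * r ^ 2) := by
    intro r hr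
    have h2 : r ^ 2 ≤ R ^ 2 := by nlinarith [hr.1, hr.2]
    exact Real.sqrt_le_sqrt (by nlinarith)
  have hDpos : ∀ r ∈ Icc (0:ℝ) R, 0 < 3 * fR - Real.sqrt (1 - a * r ^ 2) := by
    intro r hr
    have := hle1 r hr
    linarith
  refine ⟨?_, ?_, ?_, ?_⟩
  · intro r hr
    rw [hargR, harg r]
    exact hDpos r hr
  · intro r hr
    rw [hp r, hargR, harg r]
    have h1 := hfRle r hr
    have h2 := hDpos r hr
    have hnum : 0 ≤ ρ * (Real.sqrt (1 - a * r ^ 2) - fR) := by nlinarith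
    positivity
  · rw [hp R, hargR, harg R]
    simp
  · intro r hr
    obtain ⟨hr0, hrR⟩ := hr
    have hrarg : (0:ℝ) < 1 - a * r ^ 2 := hpos_arg r ⟨le_of_lt hr0, le_of_lt hrR⟩
    set F : ℝ := Real.sqrt (1 - a * r ^ 2) with hFdef
    have hFpos : 0 < F := Real.sqrt_pos.mpr hrarg
    have hF2 : F ^ 2 = 1 - a * r ^ 2 := Real.sq_sqrt (le_of_lt hrarg)
    have hDpos' : 0 < 3 * fR - F := hDpos r ⟨le_of_lt hr0, le_of_lt hrR⟩
    -- derivative of inner function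
    have h1 : HasDerivAt (fun x : ℝ => 1 - a * x ^ 2) (-(a * (2 * r))) r := by
      simpa using ((hasDerivAt_pow 2 r).const_mul a).const_sub 1
    have hsq : HasDerivAt (fun x : ℝ => Real.sqrt (1 - a * x ^ 2))
        (-(a * (2 * r)) / (2 * F)) r := by
      simpa using h1.sqrt (ne_of_gt hrarg)
    have hnum : HasDerivAt (fun x : ℝ => ρ * (Real.sqrt (1 - a * x ^ 2) - fR))
        (ρ * (-(a * (2 * r)) / (2 * F))) r := by
      simpa using (hsq.sub_const fR).const_mul ρ
    have hden : HasDerivAt (fun x : ℝ => 3 * fR - Real.sqrt (1 - a * x ^ 2))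
        (-(-(a * (2 * r)) / (2 * F))) r := hsq.const_sub (3 * fR)
    have hq := hnum.div hden (ne_of_gt hDpos')
    have hpe : ∀ x, p x = ρ * (Real.sqrt (1 - a * x ^ 2) - fR)
        / (3 * fR - Real.sqrt (1 - a * x ^ 2)) := by
      intro x; rw [hp x, hargR, harg x]
    have hq' : HasDerivAt p
        ((ρ * (-(a * (2 * r)) / (2 * F)) * (3 * fR - F)
          - ρ * (F - fR) * -(-(a * (2 * r)) / (2 * F))) / (3 * fR - F) ^ 2) r := by
      refine hq.congr_of_eventuallyEq ?_
      filter_upwards with x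
      rw [hpe x]; rfl
    convert hq' using 1
    -- algebraic identity
    rw [hpe r, hM r, ← hFdef]
    have hr_ne : r ≠ 0 := ne_of_gt hr0
    have hF_ne : F ≠ 0 := ne_of_gt hFpos
    have hD_ne : (3 * fR - F) ≠ 0 := ne_of_gt hDpos'
    have hden2 : r - 2 * G * (4 / 3 * Real.pi * r ^ 3 * ρ) = r * F ^ 2 := by
      rw [hF2, haρ]; ring
    rw [hden2, haρ]
    have hD_ne' : fR * 3 - F ≠ 0 := by intro h; apply hD_ne; linarith
    field_simp
    ring
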